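/- Let C > 0, K ≥ 1, y ∈ {1,…,K}, a ∈ [−C,C]^K, b ∈ ℝ^K. Let ℓ_y(a) = −log(e^{a_y}/∑_j e^{a_j}) be the multiclass logistic loss. Then ℓ_y(a) ≥ ℓ_y(b) + ∇ℓ_y(b)ᵀ(a−b) + (1/(log(K) + 2(C+1))) · (a−b)ᵀ ∇²ℓ_y(b) (a−b). -/
import Mathlib


open Real Finset

lemma aux_G_nonneg (L : ℝ) (hL : 0 ≤ L) (s : ℝ) (hs : s ≤ L) :
    s ^ 2 * Real.exp s ≤ (L + 2) * (s * Real.exp s - Real.exp s + 1) := by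
  set G : ℝ → ℝ := fun x => (L + 2) * (x * Real.exp x - Real.exp x + 1) - x ^ 2 * Real.exp x
    with hGdef
  have hder : ∀ x : ℝ, HasDerivAt G (Real.exp x * (x * (L - x))) x := by
    intro x
    have h1 : HasDerivAt (fun y : ℝ => y * Real.exp y) (1 * Real.exp x + x * Real.exp x) x :=
      (hasDerivAt_id x).mul (Real.hasDerivAt_exp x)
    have h2 : HasDerivAt (fun y : ℝ => y ^ 2 * Real.exp y)
        ((2 : ℕ) * x ^ 1 * Real.exp x + x ^ 2 * Real.exp x) x :=
      (hasDerivAt_pow 2 x).mul (Real.hasDerivAt_exp x)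
    have h3 : HasDerivAt G
        ((L + 2) * (1 * Real.exp x + x * Real.exp x - Real.exp x)
          - ((2 : ℕ) * x ^ 1 * Real.exp x + x ^ 2 * Real.exp x)) x := by
      exact (((h1.sub (Real.hasDerivAt_exp x)).add_const 1).const_mul (L + 2)).sub h2
    convert h3 using 1
    push_cast
    ring
  have hdiff : Differentiable ℝ G := fun x => (hder x).differentiableAt
  have hG0 : G 0 = 0 := by simp [hGdef]
  have key : 0 ≤ G s := by
    rcases le_or_gt s 0 with h | h
    · have anti : AntitoneOn G (Set.Icc s 0) := by
        apply antitoneOn_of_deriv_nonpos (convex_Icc s 0) hdiff.continuous.continuousOn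
          (hdiff.differentiableOn)
        intro x hx
        rw [interior_Icc] at hx
        rw [(hder x).deriv]
        have hx2 : x < 0 := hx.2
        have : x * (L - x) ≤ 0 :=
          mul_nonpos_of_nonpos_of_nonneg hx2.le (by linarith)
        exact mul_nonpos_of_nonneg_of_nonpos (Real.exp_pos x).le this
      have := anti (Set.left_mem_Icc.mpr h) (Set.right_mem_Icc.mpr h) h
      linarith [hG0 ▸ this]
    · have mono : MonotoneOn G (Set.Icc 0 s) := by
        apply monotoneOn_of_deriv_nonneg (convex_Icc 0 s) hdiff.continuous.continuousOn
          (hdiff.differentiableOn)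
        intro x hx
        rw [interior_Icc] at hx
        rw [(hder x).deriv]
        have hx1 : 0 < x := hx.1
        have : 0 ≤ x * (L - x) := mul_nonneg hx1.le (by linarith [hx.2])
        exact mul_nonneg (Real.exp_pos x).le this
      have := mono (Set.left_mem_Icc.mpr h.le) (Set.right_mem_Icc.mpr h.le) h.le
      linarith [hG0 ▸ this]
  have : 0 ≤ (L + 2) * (s * Real.exp s - Real.exp s + 1) - s ^ 2 * Real.exp s := key
  linarith

/-- Quadratic lower bound for the multiclass logistic loss (Lemma 1 of the paper).
Here `ℓ y a = - a y + log (∑ j, exp (a j))`, its gradient at `b` is `p - e_y`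
with `p` the softmax of `b`, and the Hessian quadratic form at `b` applied to `a - b`
is `∑ i, p i * (a i - b i)^2 - (∑ i, p i * (a i - b i))^2`. -/
theorem logistic_quadratic_lower_bound (K : ℕ) (hK : 0 < K) (C : ℝ) (hC : 0 < C)
    (y : Fin K) (a b : Fin K → ℝ) (ha : ∀ i, |a i| ≤ C)
    (ℓ : Fin K → (Fin K → ℝ) → ℝ)
    (hℓ : ∀ y' z, ℓ y' z = - Real.log (Real.exp (z y') / ∑ j, Real.exp (z j)))
    (p : Fin K → ℝ) (hp : p = fun i => Real.exp (b i) / ∑ j, Real.exp (b j)) :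
    ℓ y a ≥ ℓ y b
      + (∑ i, (p i - if i = y then 1 else 0) * (a i - b i))
      + (1 / (Real.log K + 2 * (C + 1)))
          * ((∑ i, p i * (a i - b i) ^ 2) - (∑ i, p i * (a i - b i)) ^ 2) := by
  subst hp
  haveI : Nonempty (Fin K) := Fin.pos_iff_nonempty.mp hK
  set Sa : ℝ := ∑ j, Real.exp (a j) with hSadef
  set Sb : ℝ := ∑ j, Real.exp (b j) with hSbdef
  have hSa : 0 < Sa := Finset.sum_pos (fun i _ => Real.exp_pos _) Finset.univ_nonempty
  have hSb : 0 < Sb := Finset.sum_pos (fun i _ => Real.exp_pos _) Finset.univ_nonempty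
  set p : Fin K → ℝ := fun i => Real.exp (b i) / Sb with hpdef
  set q : Fin K → ℝ := fun i => Real.exp (a i) / Sa with hqdef
  have hpi : ∀ i, 0 < p i := fun i => div_pos (Real.exp_pos _) hSb
  have hqi : ∀ i, 0 < q i := fun i => div_pos (Real.exp_pos _) hSa
  have hp1 : ∑ i, p i = 1 := by
    rw [hpdef, ← Finset.sum_div, ← hSbdef, div_self hSb.ne']
  have hq1 : ∑ i, q i = 1 := by
    rw [hqdef, ← Finset.sum_div, ← hSadef, div_self hSa.ne']
  set L : ℝ := Real.log K + 2 * C with hLdef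
  have hL : 0 ≤ L := by
    have : 0 ≤ Real.log K := Real.log_nonneg (by exact_mod_cast hK)
    positivity
  set r : Fin K → ℝ := fun i => (b i - Real.log Sb) - (a i - Real.log Sa) with hrdef
  set R : ℝ := ∑ i, p i * r i with hRdef
  set X : ℝ := ∑ i, p i * r i ^ 2 with hXdef
  set m : ℝ := Real.log Sa - Real.log Sb with hmdef
  have hlogp : ∀ i, Real.log (p i) = b i - Real.log Sb := fun i => by
    rw [hpdef, Real.log_div (Real.exp_ne_zero _) hSb.ne', Real.log_exp]
  have hlogq : ∀ i, Real.log (q i) = a i - Real.log Sa := fun i => by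
    rw [hqdef, Real.log_div (Real.exp_ne_zero _) hSa.ne', Real.log_exp]
  -- exp (r i) = p i / q i
  have hexpr : ∀ i, Real.exp (r i) = p i / q i := by
    intro i
    rw [hrdef]
    simp only
    rw [← hlogp i, ← hlogq i, Real.exp_sub, Real.exp_log (hpi i), Real.exp_log (hqi i)]
  -- r i ≤ L
  have hrL : ∀ i, r i ≤ L := by
    intro i
    have h1 : Real.log (p i) ≤ 0 := by
      apply Real.log_nonpos (hpi i).le
      rw [hpdef]
      exact div_le_one_of_le₀ (Finset.single_le_sum (fun j _ => (Real.exp_pos (b j)).le)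
        (Finset.mem_univ i)) hSb.le
    have h2 : Sa ≤ K * Real.exp C := by
      calc Sa ≤ ∑ _j : Fin K, Real.exp C :=
            Finset.sum_le_sum (fun j _ => Real.exp_le_exp.mpr (abs_le.mp (ha j)).2)
        _ = K * Real.exp C := by simp [mul_comm]
    have h3 : Real.log Sa ≤ Real.log K + C := by
      calc Real.log Sa ≤ Real.log (K * Real.exp C) := Real.log_le_log hSa h2
        _ = Real.log K + C := by
            rw [Real.log_mul (by positivity) (Real.exp_ne_zero _), Real.log_exp]
    have h4 : -C ≤ a i := (abs_le.mp (ha i)).1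
    have : r i = Real.log (p i) - Real.log (q i) := by rw [hlogp i, hlogq i]
    rw [this, hlogq i, hLdef]
    linarith
  -- termwise inequality
  have hterm : ∀ i, p i * r i ^ 2 ≤ (L + 2) * (p i * r i - p i + q i) := by
    intro i
    have h0 := aux_G_nonneg L hL (r i) (hrL i)
    have key := mul_le_mul_of_nonneg_left h0 (hqi i).le
    have hqe : q i * Real.exp (r i) = p i := by
      rw [hexpr i, mul_div_cancel₀ _ (hqi i).ne']
    have e1 : p i * r i ^ 2 = q i * (r i ^ 2 * Real.exp (r i)) := by rw [← hqe]; ring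
    have e2 : (L + 2) * (p i * r i - p i + q i)
        = q i * ((L + 2) * (r i * Real.exp (r i) - Real.exp (r i) + 1)) := by
      rw [← hqe]; ring
    rw [e1, e2]; exact key
  have hsumkey : X ≤ (L + 2) * R := by
    have h1 : X ≤ ∑ i, (L + 2) * (p i * r i - p i + q i) :=
      Finset.sum_le_sum (fun i _ => hterm i)
    have h2 : ∑ i, (L + 2) * (p i * r i - p i + q i) = (L + 2) * R := by
      rw [← Finset.mul_sum]
      congr 1
      rw [Finset.sum_add_distrib, Finset.sum_sub_distrib, hp1, hq1, ← hRdef]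
      ring
    linarith [h2 ▸ h1]
  -- identities about the sums in the goal
  have habr : ∀ i, a i - b i = m - r i := by intro i; rw [hmdef, hrdef]; ring
  have hsum1 : ∑ i, p i * (a i - b i) = m - R := by
    have : ∀ i, p i * (a i - b i) = m * p i - p i * r i := fun i => by rw [habr i]; ring
    rw [Finset.sum_congr rfl (fun i _ => this i), Finset.sum_sub_distrib, ← Finset.mul_sum,
      hp1, ← hRdef, mul_one]
  have hsum2 : ∑ i, p i * (a i - b i) ^ 2 = m ^ 2 - 2 * m * R + X := by
    have : ∀ i, p i * (a i - b i) ^ 2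
        = m ^ 2 * p i - 2 * m * (p i * r i) + p i * r i ^ 2 := fun i => by rw [habr i]; ring
    rw [Finset.sum_congr rfl (fun i _ => this i), Finset.sum_add_distrib,
      Finset.sum_sub_distrib, ← Finset.mul_sum, ← Finset.mul_sum, hp1, ← hRdef, ← hXdef]
    ring
  have hdelta : ∑ i, (p i - if i = y then 1 else 0) * (a i - b i)
      = (m - R) - (a y - b y) := by
    have : ∀ i, (p i - if i = y then 1 else 0) * (a i - b i)
        = p i * (a i - b i) - (if i = y then a i - b i else 0) := by
      intro i; by_cases h : i = y <;> simp [h] <;> ring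
    rw [Finset.sum_congr rfl (fun i _ => this i), Finset.sum_sub_distrib,
      Finset.sum_ite_eq' Finset.univ y (fun i => a i - b i), hsum1]
    simp
  have hla : ℓ y a = Real.log Sa - a y := by
    rw [hℓ, Real.log_div (Real.exp_ne_zero _) hSa.ne', Real.log_exp]
    ring
  have hlb : ℓ y b = Real.log Sb - b y := by
    rw [hℓ, Real.log_div (Real.exp_ne_zero _) hSb.ne', Real.log_exp]
    ring
  have hcc : Real.log K + 2 * (C + 1) = L + 2 := by rw [hLdef]; ring
  have hcpos : (0 : ℝ) < L + 2 := by linarith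
  have hfin : (1 / (L + 2)) * (X - R ^ 2) ≤ R := by
    rw [div_mul_eq_mul_div, one_mul, div_le_iff₀ hcpos]
    nlinarith [sq_nonneg R, hsumkey]
  rw [hla, hlb, hdelta, hsum1, hsum2, hcc]
  have hvar : (m ^ 2 - 2 * m * R + X) - (m - R) ^ 2 = X - R ^ 2 := by ring
  rw [hvar]
  have hm : m = Real.log Sa - Real.log Sb := hmdef
  linarith [hfin]
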